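/- Suppose f(t,x) solves the heat equation ∂_t f = Δf on a locally finite weighted graph satisfying the curvature condition Γ₂(g,g) ≥ (1/m)(Δg)² + (k/2)|∇g|² (for all functions g, with constants m > 0, k ∈ ℝ). Then (∂_t − Δ)((1/2)|∇f|²)(t,x) ≤ (−k + max(2 − 2/m, 0)) |∇f|²(t,x) at every vertex x and time t. -/

import Mathlib

open Finset Real

/-- Graph Laplacian `Δf(x) = (1/d x) * Σ_{y ∈ N x} μ x y * (f y - f x)`. -/
noncomputable def glap {V : Type*} (N : V → Finset V) (μ : V → V → ℝ) (d : V → ℝ)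
    (f : V → ℝ) (x : V) : ℝ :=
  (1 / d x) * ∑ y ∈ N x, μ x y * (f y - f x)

/-- Gradient norm squared `|∇f|²(x)`. -/
noncomputable def ggrad {V : Type*} (N : V → Finset V) (μ : V → V → ℝ) (d : V → ℝ)
    (f : V → ℝ) (x : V) : ℝ :=
  (1 / d x) * ∑ y ∈ N x, μ x y * (f y - f x) ^ 2

/-- Pointwise inner product `(∇f, ∇g)(x)`. -/
noncomputable def ginner {V : Type*} (N : V → Finset V) (μ : V → V → ℝ) (d : V → ℝ)
    (f g : V → ℝ) (x : V) : ℝ :=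
  (1 / d x) * ∑ y ∈ N x, μ x y * (f y - f x) * (g y - g x)

/-- Hessian norm squared `|D²f|²(x)`. -/
noncomputable def ghess {V : Type*} (N : V → Finset V) (μ : V → V → ℝ) (d : V → ℝ)
    (f : V → ℝ) (x : V) : ℝ :=
  (1 / d x) * ∑ y ∈ N x, (μ x y / d y) * ∑ z ∈ N y, μ y z * (f x - 2 * f y + f z) ^ 2

/-- Carré du champ `Γ(f,g)(x) = (1/2)[Δ(fg) - fΔg - gΔf](x)`. -/
noncomputable def ggamma {V : Type*} (N : V → Finset V) (μ : V → V → ℝ) (d : V → ℝ)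
    (f g : V → ℝ) (x : V) : ℝ :=
  (1 / 2) * (glap N μ d (fun y => f y * g y) x - f x * glap N μ d g x - g x * glap N μ d f x)

/-- Iterated carré du champ `Γ₂(f,f)(x) = (1/2)[ΔΓ(f,f) - 2Γ(f,Δf)](x)`. -/
noncomputable def ggamma2 {V : Type*} (N : V → Finset V) (μ : V → V → ℝ) (d : V → ℝ)
    (f : V → ℝ) (x : V) : ℝ :=
  (1 / 2) * (glap N μ d (ggamma N μ d f f) x - 2 * ggamma N μ d f (glap N μ d f) x)

lemma ggamma_eq_half_ginner {V : Type*} (N : V → Finset V) (μ : V → V → ℝ) (d : V → ℝ)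
    (f g : V → ℝ) (x : V) :
    ggamma N μ d f g x = (1 / 2) * ginner N μ d f g x := by
  unfold ggamma ginner glap
  rw [Finset.mul_sum, Finset.mul_sum, Finset.mul_sum, Finset.mul_sum, Finset.mul_sum,
    ← Finset.sum_sub_distrib, ← Finset.sum_sub_distrib, Finset.mul_sum, Finset.mul_sum, Finset.mul_sum]
  apply Finset.sum_congr rfl
  intro y _
  dsimp only
  ring

lemma ginner_self {V : Type*} (N : V → Finset V) (μ : V → V → ℝ) (d : V → ℝ)
    (f : V → ℝ) (x : V) :
    ginner N μ d f f x = ggrad N μ d f x := by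
  unfold ginner ggrad
  congr 1
  apply Finset.sum_congr rfl
  intro y _
  ring

/-- under the curvature condition CD(k,m), for a solution of
the heat equation, `(∂ₜ - Δ)((1/2)|∇f|²) ≤ (-k + max(2 - 2/m, 0)) |∇f|²`. -/
theorem stmt10 {V : Type*} (N : V → Finset V) (μ : V → V → ℝ) (d : V → ℝ)
    (hsym : ∀ x y, μ x y = μ y x) (hN : ∀ x y, y ∈ N x ↔ x ∈ N y)
    (hnn : ∀ x y, 0 ≤ μ x y) (hd : ∀ x, d x = ∑ y ∈ N x, μ x y)
    (hdpos : ∀ x, 0 < d x) (m k : ℝ) (hm : 0 < m)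
    (hcurv : ∀ g : V → ℝ, ∀ x, (1 / m) * (glap N μ d g x) ^ 2 + (k / 2) * ggrad N μ d g x
      ≤ ggamma2 N μ d g x)
    (f : ℝ → V → ℝ)
    (hheat : ∀ x t, HasDerivAt (fun s => f s x) (glap N μ d (f t) x) t)
    (t : ℝ) (x : V) :
    deriv (fun s => (1 / 2) * ggrad N μ d (f s) x) t
        - glap N μ d (fun y => (1 / 2) * ggrad N μ d (f t) y) x
      ≤ (-k + max (2 - 2 / m) 0) * ggrad N μ d (f t) x := by
  set L : V → ℝ := glap N μ d (f t) with hL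
  have hder : HasDerivAt (fun s => (1 / 2) * ggrad N μ d (f s) x)
      (ginner N μ d (f t) L x) t := by
    have h1 : HasDerivAt (fun s => ∑ y ∈ N x, μ x y * (f s y - f s x) ^ 2)
        (∑ y ∈ N x, μ x y * (2 * (f t y - f t x) * (L y - L x))) t := by
      apply HasDerivAt.fun_sum
      intro y _
      have h := (((hheat y t).sub (hheat x t)).pow 2).const_mul (μ x y)
      simpa [pow_one, mul_comm, mul_assoc, mul_left_comm] using h
    have h2 := (h1.const_mul (1 / d x)).const_mul (1 / 2)
    have hfun : (fun s => (1 / 2) * ggrad N μ d (f s) x)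
        = (fun s => (1 / 2) * ((1 / d x) * ∑ y ∈ N x, μ x y * (f s y - f s x) ^ 2)) := rfl
    rw [hfun]
    convert h2 using 1
    · rfl
    · rfl
    have hterm : ∀ y ∈ N x, μ x y * (2 * (f t y - f t x) * (L y - L x))
        = 2 * (μ x y * (f t y - f t x) * (L y - L x)) := by intro y _; ring
    rw [Finset.sum_congr rfl hterm, ← Finset.mul_sum]
    unfold ginner
    ring
  rw [hder.deriv]
  have hglap_eq : glap N μ d (fun y => (1 / 2) * ggrad N μ d (f t) y) x
      = glap N μ d (ggamma N μ d (f t) (f t)) x := by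
    congr 1
    funext y
    rw [ggamma_eq_half_ginner, ginner_self]
  rw [hglap_eq]
  have key : ginner N μ d (f t) L x - glap N μ d (ggamma N μ d (f t) (f t)) x
      = -2 * ggamma2 N μ d (f t) x := by
    unfold ggamma2
    rw [ggamma_eq_half_ginner]
    rw [← hL]
    ring
  rw [key]
  have hc := hcurv (f t) x
  have hg0 : 0 ≤ ggrad N μ d (f t) x := by
    unfold ggrad
    apply mul_nonneg (one_div_nonneg.mpr (hdpos x).le)
    exact Finset.sum_nonneg fun y _ => mul_nonneg (hnn x y) (sq_nonneg _)
  have hM : (0 : ℝ) ≤ max (2 - 2 / m) 0 := le_max_right _ _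
  have h1 : 0 ≤ max (2 - 2 / m) 0 * ggrad N μ d (f t) x := mul_nonneg hM hg0
  have h2 : 0 ≤ (1 / m) * (glap N μ d (f t) x) ^ 2 :=
    mul_nonneg (one_div_nonneg.mpr hm.le) (sq_nonneg _)
  linarith
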